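/- For all x, y ∈ ℝ^d and ℓ ∈ ℤ₊: ‖x−y‖^(2ℓ) = ∑_{j=0}^{2ℓ} (−1)^j ‖x‖^(2(j−ℓ)) ∑_{2a+b=j} 2^b ∑_{|β|=b} (ℓ!/(a!β!c!)) p_{c,β}(x) p_{c,β}(y), where c = ℓ − a − b and p_{c,β}(x) := ‖x‖^(2c) x^β; for j < ℓ the factor ‖x‖^(2(j−ℓ)) combines with p_{c,β}(x) = ‖x‖^(2c) x^β to give the polynomial ‖x‖^(2(c+j−ℓ)) x^β = ‖x‖^(2a) x^β, so each term is polynomial. -/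

import Mathlib

open MvPolynomial Finset

lemma sum_finsuppAntidiag_eq_aux {M : Type*} [AddCommMonoid M] {d n : ℕ}
    (F : (Fin d →₀ ℕ) → M) (G : (Fin d → ℕ) → M) (h : ∀ β : Fin d →₀ ℕ, F β = G ⇑β) :
    ∑ β ∈ finsuppAntidiag (univ : Finset (Fin d)) n, F β
      = ∑ k ∈ piAntidiag (univ : Finset (Fin d)) n, G k := by
  rw [finsuppAntidiag, sum_map]
  simp only [Function.Embedding.coeFn_mk, h, Finsupp.coe_mk]
  exact sum_attach _ _

/-- Rearranged multinomial expansion of `‖x−y‖^(2ℓ)`, grouped by the degree `j = 2a + |β|`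
in `x`: each term is `(−1)^j 2^b (ℓ!/(a!β!c!)) ‖x‖^(2a) x^β ‖y‖^(2c) y^β` with `b = j − 2a`
and `c = ℓ − a − b = ℓ − (j − a)` (the factor `‖x‖^(2(j−ℓ))` combined with
`p_{c,β}(x) = ‖x‖^(2c) x^β` gives `‖x‖^(2a) x^β`). -/
theorem norm_sub_pow_eq_sum_by_x_degree (d l : ℕ) (x y : EuclideanSpace ℝ (Fin d)) :
    ‖x - y‖ ^ (2 * l) =
      ∑ j ∈ range (2 * l + 1), (-1 : ℝ) ^ j *
        ∑ a ∈ (range (l + 1)).filter (fun a => 2 * a ≤ j ∧ j - a ≤ l),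
          (2 : ℝ) ^ (j - 2 * a) *
            ∑ β ∈ finsuppAntidiag (univ : Finset (Fin d)) (j - 2 * a),
              ((l.factorial : ℝ) /
                  (a.factorial * (β.prod fun _ e => e.factorial) * (l - (j - a)).factorial)) *
                ‖x‖ ^ (2 * a) * (∏ i, x i ^ β i) *
                ‖y‖ ^ (2 * (l - (j - a))) * ∏ i, y i ^ β i := by
  classical
  have hI : (inner ℝ x y : ℝ) = ∑ i, x i * y i := by
    simp [PiLp.inner_apply, RCLike.inner_apply, mul_comm]
  have key : ∀ b : ℕ, (inner ℝ x y : ℝ) ^ b =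
      ∑ k ∈ piAntidiag (univ : Finset (Fin d)) b,
        (Nat.multinomial univ k : ℝ) * ((∏ i, x i ^ k i) * ∏ i, y i ^ k i) := by
    intro b
    rw [hI, Finset.sum_pow_eq_sum_piAntidiag]
    refine sum_congr rfl fun k _ => ?_
    rw [← prod_mul_distrib]
    simp [mul_pow]
  trans ∑ m ∈ range (l+1), ∑ a ∈ range (m+1),
      (-1:ℝ)^(m+a) * ((2:ℝ)^(m-a) *
        ∑ β ∈ finsuppAntidiag (univ : Finset (Fin d)) (m-a),
          ((l.factorial : ℝ) /
              (a.factorial * (β.prod fun _ e => e.factorial) * (l-m).factorial)) *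
            ‖x‖^(2*a) * (∏ i, x i ^ β i) * ‖y‖^(2*(l-m)) * ∏ i, y i ^ β i)
  · -- main computation
    rw [pow_mul, norm_sub_sq_real, add_pow]
    refine sum_congr rfl fun m hm => ?_
    rw [mem_range] at hm
    rw [sub_eq_add_neg, add_pow, sum_mul, sum_mul]
    refine sum_congr rfl fun a ha => ?_
    rw [mem_range] at ha
    have ham : a ≤ m := by omega
    have hml : m ≤ l := by omega
    -- rewrite the finsupp sum as a piAntidiag sum
    rw [sum_finsuppAntidiag_eq_aux _
      (fun k => ((l.factorial : ℝ) /
              (a.factorial * (∏ i, ((k i).factorial : ℝ)) * (l-m).factorial)) *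
            ‖x‖^(2*a) * (∏ i, x i ^ k i) * ‖y‖^(2*(l-m)) * ∏ i, y i ^ k i)
      (fun β => by rw [Finsupp.prod_fintype _ _ fun i => Nat.factorial_zero]; push_cast; ring)]
    rw [neg_pow (2 * (inner ℝ x y : ℝ)), mul_pow, key (m - a)]
    simp only [Finset.sum_mul, Finset.mul_sum]
    refine sum_congr rfl fun k hk => ?_
    rw [mem_piAntidiag] at hk
    have hsum : ∑ i, k i = m - a := hk.1
    have hmult : (Nat.multinomial univ k : ℝ) =
        ((m - a).factorial : ℝ) / ∏ i, ((k i).factorial : ℝ) := by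
      have h := Nat.multinomial_spec (univ : Finset (Fin d)) k
      rw [hsum] at h
      have h' : ((∏ i, (k i).factorial : ℕ) : ℝ) * (Nat.multinomial univ k : ℝ)
          = ((m - a).factorial : ℝ) := by exact_mod_cast congrArg (Nat.cast : ℕ → ℝ) h
      push_cast at h'
      have hne : (∏ i, ((k i).factorial : ℝ)) ≠ 0 := by positivity
      field_simp at h' ⊢
      linarith [h']
    have hsign : (-1:ℝ)^(m+a) = (-1:ℝ)^(m-a) := by
      have : m + a = (m - a) + 2 * a := by omega
      rw [this, pow_add, pow_mul]
      simp
    have hcl : ((l.choose m : ℕ) : ℝ) = (l.factorial : ℝ) /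
        ((m.factorial : ℝ) * ((l - m).factorial : ℝ)) := by
      rw [Nat.cast_choose ℝ hml]
    have hcm : ((m.choose a : ℕ) : ℝ) = (m.factorial : ℝ) /
        ((a.factorial : ℝ) * ((m - a).factorial : ℝ)) := by
      rw [Nat.cast_choose ℝ ham]
    rw [hmult, hsign, hcl, hcm, pow_mul, pow_mul]
    have h1 : ((m.factorial : ℝ)) ≠ 0 := by positivity
    have h2 : ((a.factorial : ℝ)) ≠ 0 := by positivity
    have h3 : (((l-m).factorial : ℝ)) ≠ 0 := by positivity
    have h4 : (((m-a).factorial : ℝ)) ≠ 0 := by positivity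
    have h5 : (∏ i, ((k i).factorial : ℝ)) ≠ 0 := by positivity
    field_simp
  · -- reindexing
    simp only [mul_sum]
    rw [sum_sigma' (range (l+1)) (fun m => range (m+1)),
      sum_sigma' (range (2*l+1)) (fun j => (range (l + 1)).filter (fun a => 2 * a ≤ j ∧ j - a ≤ l))]
    refine sum_nbij' (fun p => ⟨p.1 + p.2, p.2⟩) (fun p => ⟨p.1 - p.2, p.2⟩) ?_ ?_ ?_ ?_ ?_
    · rintro ⟨m, a⟩ h
      simp only [mem_sigma, mem_range, mem_filter] at h ⊢
      omega
    · rintro ⟨j, a⟩ h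
      simp only [mem_sigma, mem_range, mem_filter] at h ⊢
      omega
    · rintro ⟨m, a⟩ h
      simp only [mem_sigma, mem_range] at h
      dsimp only
      simp only [Sigma.mk.inj_iff, heq_eq_eq]
      exact ⟨by omega, trivial⟩
    · rintro ⟨j, a⟩ h
      simp only [mem_sigma, mem_range, mem_filter] at h
      dsimp only
      simp only [Sigma.mk.inj_iff, heq_eq_eq]
      exact ⟨by omega, trivial⟩
    · rintro ⟨m, a⟩ h
      simp only [mem_sigma, mem_range] at h
      have e1 : m + a - 2 * a = m - a := by omega
      have e2 : l - (m + a - a) = l - m := by omega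
      simp only [e1, e2]
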